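/- Let m ≥ 2 and let E_m be the permutation of length 8m+5 constructed in the main theorem (E_m = 1 E'_m (8m+5), where E'_m is obtained by Construction 2 from S_m = (6m+4)(6m+5)…(8m+4), H_m, and T_m = 2,3,…,(2m+2)). Then for every i with 3 ≤ i ≤ 8m+2, any extension of E_m in position i contains a square of length 4; yet E_m is not S-crucial. -/

import Mathlib

set_option linter.unusedSectionVars false


/-- Two sequences of distinct integers are order-isomorphic:
same length and corresponding pairs compare the same way. -/
def OrdIso (p q : List ℤ) : Prop :=
  p.length = q.length ∧
  ∀ i j : ℕ, i < p.length → j < p.length →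
    (p.getD i 0 < p.getD j 0 ↔ q.getD i 0 < q.getD j 0)

/-- A square is a sequence X₁X₂ with X₁ order-isomorphic to X₂ and |X₁| ≥ 2. -/
def IsSquareL (x : List ℤ) : Prop :=
  ∃ a b : List ℤ, x = a ++ b ∧ 2 ≤ a.length ∧ OrdIso a b

/-- A sequence contains a square if some contiguous factor is a square. -/
def ContainsSquare (p : List ℤ) : Prop :=
  ∃ f : List ℤ, f <:+: p ∧ IsSquareL f

/-- Square-free: no contiguous factor is a square. -/
def SquareFreeL (p : List ℤ) : Prop := ¬ ContainsSquare p

/-- `Q` is an extension of `P` in position `i`: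
`Q` has length `|P|+1` and deleting its (i+1)-th symbol gives a
sequence order-isomorphic to `P`. -/
def ExtL (Q P : List ℤ) (i : ℕ) : Prop :=
  Q.Nodup ∧ Q.length = P.length + 1 ∧ i ≤ P.length ∧ OrdIso (Q.eraseIdx i) P

/-- The interleaving pattern a₁b₁c₁b₂a₂b₃c₂… of length 4m-1 :
with 1-based index i, pᵢ = a_{(i+3)/4} if i ≡ 1 mod 4, pᵢ = c_{(i+1)/4}
if i ≡ 3 mod 4, pᵢ = b_{i/2} if i is even. -/
def interleave (A B C : List ℤ) (m : ℕ) : List ℤ :=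
  (List.range (4*m - 1)).map (fun k =>
    if (k+1) % 4 = 1 then A.getD ((k+4)/4 - 1) 0
    else if (k+1) % 4 = 3 then C.getD ((k+2)/4 - 1) 0
    else B.getD ((k+1)/2 - 1) 0)

/-- H_m = (6m+3) H'_m (2m+3) where H'_m is Construction 1 applied to
X_m (decreasing on {2m+4,…,3m+3}), Y_m, Z_m (decreasing on {5m+3,…,6m+2}). -/
def Hm (m : ℕ) (Y : List ℤ) : List ℤ :=
  ((6*m + 3 : ℤ) ::
    interleave ((List.range m).map (fun j => (3*m + 3 - j : ℤ))) Y
      ((List.range m).map (fun j => (6*m + 2 - j : ℤ))) m) ++ [(2*m + 3 : ℤ)]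

/-- E_m = 1 E'_m (8m+5) where E'_m is Construction 2 applied to
S_m = (6m+4)…(8m+4), H_m and T_m = 2,3,…,(2m+2). -/
def Em (m : ℕ) (Y : List ℤ) : List ℤ :=
  ((1 : ℤ) ::
    interleave ((List.range (2*m + 1)).map (fun j => (6*m + 4 + j : ℤ))) (Hm m Y)
      ((List.range (2*m + 1)).map (fun j => (2 + j : ℤ))) (2*m + 1)) ++ [(8*m + 5 : ℤ)]


lemma interleave_length (A B C : List ℤ) (m : ℕ) :
    (interleave A B C m).length = 4*m - 1 := by
  simp [interleave]

lemma interleave_getD (A B C : List ℤ) (m k : ℕ) (hk : k < 4*m - 1) :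
    (interleave A B C m).getD k 0 =
      if (k+1) % 4 = 1 then A.getD ((k+4)/4 - 1) 0
      else if (k+1) % 4 = 3 then C.getD ((k+2)/4 - 1) 0
      else B.getD ((k+1)/2 - 1) 0 := by
  rw [interleave, List.getD_eq_getElem?_getD, List.getElem?_map,
    List.getElem?_range hk]
  rfl

lemma coe_range (n : ℕ) :
    (((List.range n) : List ℤ)) = (List.range n).map (fun a : ℕ => (a : ℤ)) := by
  show (List.range n).flatMap _ = _
  induction (List.range n) with
  | nil => rfl
  | cons h t ih => simp_all [List.flatMap_cons]

lemma getD_map_range (f : ℕ → ℤ) (n j : ℕ) (h : j < n) :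
    ((List.range n).map f).getD j 0 = f j := by
  rw [List.getD_eq_getElem?_getD, List.getElem?_map, List.getElem?_range h]
  rfl

lemma getD_map_coe_range (f : ℤ → ℤ) (n j : ℕ) (h : j < n) :
    ((((List.range n) : List ℤ)).map f).getD j 0 = f j := by
  rw [coe_range, List.map_map, getD_map_range _ _ _ h]
  rfl

/-! ### Hm entry lemmas -/
section HmLemmas
variable (m : ℕ) (Y : List ℤ)

lemma Hm_length (hm : 1 ≤ m) : (Hm m Y).length = 4*m+1 := by
  simp [Hm, interleave_length]; omega

lemma Hm_getD_zero : (Hm m Y).getD 0 0 = 6*m+3 := rfl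

lemma Hm_getD_mid (q : ℕ) (h1 : 1 ≤ q) (h2 : q < 4*m) :
    (Hm m Y).getD q 0 =
      (interleave (((List.range m) : List ℤ).map (fun j => (3*(m:ℤ) + 3 - j)) ) Y
      (((List.range m) : List ℤ).map (fun j => (6*(m:ℤ) + 2 - j))) m).getD (q-1) 0 := by
  rw [Hm]
  rw [List.getD_append _ _ _ _ (by simp [interleave_length]; omega)]
  rcases Nat.exists_eq_add_of_le h1 with ⟨r, rfl⟩
  rw [show 1 + r = r + 1 by omega, List.getD_cons_succ]
  congr 1

lemma Hm_getD_last (hm : 1 ≤ m) : (Hm m Y).getD (4*m) 0 = 2*m+3 := by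
  rw [Hm, List.getD_eq_getElem?_getD,
    List.getElem?_append_right (by simp [interleave_length]; omega)]
  simp only [List.length_cons, interleave_length]
  rw [show 4*m - (4*m-1+1) = 0 by omega]
  rfl

lemma Hm_getD_X (q : ℕ) (hq1 : q % 4 = 1) (hq : q < 4*m) :
    (Hm m Y).getD q 0 = (3*(m:ℤ)+3) - ((q-1)/4 : ℕ) := by
  rw [Hm_getD_mid m Y q (by omega) hq, interleave_getD _ _ _ _ _ (by omega)]
  rw [show (q-1+1) % 4 = 1 by omega, if_pos rfl,
    getD_map_coe_range _ _ _ (by omega)]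
  congr 2
  omega

lemma Hm_getD_Z (q : ℕ) (hq3 : q % 4 = 3) (hq : q < 4*m) :
    (Hm m Y).getD q 0 = (6*(m:ℤ)+2) - ((q-3)/4 : ℕ) := by
  rw [Hm_getD_mid m Y q (by omega) hq, interleave_getD _ _ _ _ _ (by omega)]
  rw [show (q-1+1) % 4 = 3 by omega, if_neg (by omega), if_pos rfl,
    getD_map_coe_range _ _ _ (by omega)]
  congr 2
  omega

lemma Hm_getD_Y (q : ℕ) (hq0 : q % 2 = 0) (h1 : 1 ≤ q) (h2 : q < 4*m) :
    (Hm m Y).getD q 0 = Y.getD (q/2 - 1) 0 := by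
  rw [Hm_getD_mid m Y q h1 h2, interleave_getD _ _ _ _ _ (by omega)]
  rw [if_neg (by omega), if_neg (by omega)]
  congr 1
  omega

end HmLemmas

/-! ### Em entry lemmas -/
section EmLemmas
variable (m : ℕ) (Y : List ℤ)

lemma Em_length : (Em m Y).length = 8*m+5 := by
  simp [Em, interleave_length]; omega

lemma Em_getD_zero : (Em m Y).getD 0 0 = 1 := rfl

lemma Em_getD_mid (p : ℕ) (h1 : 1 ≤ p) (h2 : p < 8*m+4) :
    (Em m Y).getD p 0 =
      (interleave (((List.range (2*m+1)) : List ℤ).map (fun j => (6*(m:ℤ) + 4 + j)))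
        (Hm m Y)
        (((List.range (2*m+1)) : List ℤ).map (fun j => ((2:ℤ) + j))) (2*m+1)).getD (p-1) 0 := by
  rw [Em]
  rw [List.getD_append _ _ _ _ (by simp [interleave_length]; omega)]
  rcases Nat.exists_eq_add_of_le h1 with ⟨r, rfl⟩
  rw [show 1 + r = r + 1 by omega, List.getD_cons_succ]
  congr 1

lemma Em_getD_last : (Em m Y).getD (8*m+4) 0 = 8*m+5 := by
  rw [Em, List.getD_eq_getElem?_getD,
    List.getElem?_append_right (by simp [interleave_length]; omega)]
  simp only [List.length_cons, interleave_length]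
  rw [show 8*m+4 - (4*(2*m+1)-1+1) = 0 by omega]
  rfl

lemma Em_getD_U (p : ℕ) (hp1 : p % 4 = 1) (hp : p < 8*m+4) :
    (Em m Y).getD p 0 = (6*(m:ℤ)+4) + ((p-1)/4 : ℕ) := by
  rw [Em_getD_mid m Y p (by omega) hp, interleave_getD _ _ _ _ _ (by omega)]
  rw [show (p-1+1) % 4 = 1 by omega, if_pos rfl,
    getD_map_coe_range _ _ _ (by omega)]
  congr 2
  omega

lemma Em_getD_W (p : ℕ) (hp3 : p % 4 = 3) (hp : p < 8*m+4) :
    (Em m Y).getD p 0 = (2:ℤ) + ((p-3)/4 : ℕ) := by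
  rw [Em_getD_mid m Y p (by omega) hp, interleave_getD _ _ _ _ _ (by omega)]
  rw [show (p-1+1) % 4 = 3 by omega, if_neg (by omega), if_pos rfl,
    getD_map_coe_range _ _ _ (by omega)]
  congr 2
  omega

lemma Em_getD_V (p : ℕ) (hp0 : p % 2 = 0) (h1 : 1 ≤ p) (h2 : p < 8*m+4) :
    (Em m Y).getD p 0 = (Hm m Y).getD (p/2 - 1) 0 := by
  rw [Em_getD_mid m Y p h1 h2, interleave_getD _ _ _ _ _ (by omega)]
  rw [if_neg (by omega), if_neg (by omega)]
  congr 1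
  omega

end EmLemmas

/-! ### Bounds -/
section Bounds
variable (m : ℕ) (Y : List ℤ) (hm : 2 ≤ m) (hYlen : Y.length = 2*m - 1)
  (hYset : ∀ y ∈ Y, (3*m + 4 : ℤ) ≤ y ∧ y ≤ (5*m + 2 : ℤ))

include hm hYlen hYset in
lemma Y_getD_bound (i : ℕ) (hi : i < 2*m - 1) :
    (3*(m:ℤ) + 4) ≤ Y.getD i 0 ∧ Y.getD i 0 ≤ (5*(m:ℤ) + 2) := by
  have hi' : i < Y.length := by omega
  rw [List.getD_eq_getElem _ _ hi']
  exact hYset _ (List.getElem_mem hi')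

include hm in
lemma Hm_bound_X (q : ℕ) (hq1 : q % 4 = 1) (hq : q < 4*m) :
    (2*(m:ℤ)+4) ≤ (Hm m Y).getD q 0 ∧ (Hm m Y).getD q 0 ≤ (3*(m:ℤ)+3) := by
  rw [Hm_getD_X m Y q hq1 hq]
  have h1 : (q-1)/4 ≤ m - 1 := by omega
  have h2 : ((q-1)/4 : ℤ) ≤ (m:ℤ) - 1 := by
    have := Int.ofNat_le.mpr h1
    push_cast at this ⊢
    omega
  have h3 : (0:ℤ) ≤ ((q-1)/4 : ℕ) := Int.ofNat_nonneg _
  constructor <;> omega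

include hm in
lemma Hm_bound_Z (q : ℕ) (hq3 : q % 4 = 3) (hq : q < 4*m) :
    (5*(m:ℤ)+3) ≤ (Hm m Y).getD q 0 ∧ (Hm m Y).getD q 0 ≤ (6*(m:ℤ)+2) := by
  rw [Hm_getD_Z m Y q hq3 hq]
  have h1 : (q-3)/4 ≤ m - 1 := by omega
  have h2 : ((q-3)/4 : ℤ) ≤ (m:ℤ) - 1 := by
    have := Int.ofNat_le.mpr h1
    push_cast at this ⊢
    omega
  have h3 : (0:ℤ) ≤ ((q-3)/4 : ℕ) := Int.ofNat_nonneg _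
  constructor <;> omega

include hm hYlen hYset in
lemma Hm_bound_Y (q : ℕ) (hq0 : q % 2 = 0) (h1 : 1 ≤ q) (h2 : q < 4*m) :
    (3*(m:ℤ)+4) ≤ (Hm m Y).getD q 0 ∧ (Hm m Y).getD q 0 ≤ (5*(m:ℤ)+2) := by
  rw [Hm_getD_Y m Y q hq0 h1 h2]
  exact Y_getD_bound m Y hm hYlen hYset _ (by omega)

include hm hYlen hYset in
lemma Hm_bound (q : ℕ) (hq : q ≤ 4*m) :
    (2*(m:ℤ)+3) ≤ (Hm m Y).getD q 0 ∧ (Hm m Y).getD q 0 ≤ (6*(m:ℤ)+3) := by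
  rcases eq_or_ne q 0 with rfl | hq0
  · rw [Hm_getD_zero]; constructor <;> omega
  rcases eq_or_ne q (4*m) with rfl | hq4
  · rw [Hm_getD_last m Y (by omega)]; constructor <;> omega
  have hq' : q < 4*m := by omega
  rcases Nat.mod_two_eq_zero_or_one q with he | ho
  · have := Hm_bound_Y m Y hm hYlen hYset q he (by omega) hq'
    constructor <;> omega
  · rcases (by omega : q % 4 = 1 ∨ q % 4 = 3) with h | h
    · have := Hm_bound_X m Y hm q h hq'; constructor <;> omega
    · have := Hm_bound_Z m Y hm q h hq'; constructor <;> omega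

include hm in
lemma Em_bound_U (p : ℕ) (hp1 : p % 4 = 1) (hp : p < 8*m+4) :
    (6*(m:ℤ)+4) ≤ (Em m Y).getD p 0 ∧ (Em m Y).getD p 0 ≤ (8*(m:ℤ)+4) := by
  rw [Em_getD_U m Y p hp1 hp]
  have h1 : (p-1)/4 ≤ 2*m := by omega
  have h2 : ((p-1)/4 : ℤ) ≤ 2*(m:ℤ) := by
    have := Int.ofNat_le.mpr h1
    push_cast at this ⊢
    omega
  have h3 : (0:ℤ) ≤ ((p-1)/4 : ℕ) := Int.ofNat_nonneg _
  constructor <;> omega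

include hm in
lemma Em_bound_W (p : ℕ) (hp3 : p % 4 = 3) (hp : p < 8*m+4) :
    (2:ℤ) ≤ (Em m Y).getD p 0 ∧ (Em m Y).getD p 0 ≤ (2*(m:ℤ)+2) := by
  rw [Em_getD_W m Y p hp3 hp]
  have h1 : (p-3)/4 ≤ 2*m := by omega
  have h2 : ((p-3)/4 : ℤ) ≤ 2*(m:ℤ) := by
    have := Int.ofNat_le.mpr h1
    push_cast at this ⊢
    omega
  have h3 : (0:ℤ) ≤ ((p-3)/4 : ℕ) := Int.ofNat_nonneg _
  constructor <;> omega

include hm hYlen hYset in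
lemma Em_bound_V (p : ℕ) (hp0 : p % 2 = 0) (h1 : 1 ≤ p) (h2 : p < 8*m+4) :
    (2*(m:ℤ)+3) ≤ (Em m Y).getD p 0 ∧ (Em m Y).getD p 0 ≤ (6*(m:ℤ)+3) := by
  rw [Em_getD_V m Y p hp0 h1 h2]
  exact Hm_bound m Y hm hYlen hYset _ (by omega)

end Bounds

/-! ### Sign patterns -/
section Signs
variable (m : ℕ) (Y : List ℤ) (hm : 2 ≤ m) (hYlen : Y.length = 2*m - 1)
  (hYset : ∀ y ∈ Y, (3*m + 4 : ℤ) ≤ y ∧ y ≤ (5*m + 2 : ℤ))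

include hm hYlen hYset in
lemma Hm_sign (k : ℕ) (hk : k < 4*m) :
    ((Hm m Y).getD k 0 < (Hm m Y).getD (k+1) 0 ↔ (k % 4 = 1 ∨ k % 4 = 2)) := by
  rcases (by omega : k % 4 = 0 ∨ k % 4 = 1 ∨ k % 4 = 2 ∨ k % 4 = 3) with h | h | h | h
  · rcases eq_or_ne k 0 with rfl | h0
    · rw [Hm_getD_zero, show (0+1 : ℕ) = 1 from rfl]
      have := Hm_bound_X m Y hm 1 (by omega) (by omega)
      constructor <;> intro hc <;> omega
    · have h1 := Hm_bound_Y m Y hm hYlen hYset k (by omega) (by omega) hk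
      have h2 := Hm_bound_X m Y hm (k+1) (by omega) (by omega)
      constructor <;> intro hc <;> omega
  · have h1 := Hm_bound_X m Y hm k h hk
    have h2 := Hm_bound_Y m Y hm hYlen hYset (k+1) (by omega) (by omega) (by omega)
    constructor <;> intro hc <;> omega
  · have h1 := Hm_bound_Y m Y hm hYlen hYset k (by omega) (by omega) hk
    have h2 := Hm_bound_Z m Y hm (k+1) (by omega) (by omega)
    constructor <;> intro hc <;> omega
  · have h1 := Hm_bound_Z m Y hm k h hk
    rcases eq_or_ne (k+1) (4*m) with he | hne
    · rw [he, Hm_getD_last m Y (by omega)]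
      constructor <;> intro hc <;> omega
    · have h2 := Hm_bound_Y m Y hm hYlen hYset (k+1) (by omega) (by omega) (by omega)
      constructor <;> intro hc <;> omega

include hm hYlen hYset in
lemma Em_sign (k : ℕ) (hk : k < 8*m+4) :
    ((Em m Y).getD k 0 < (Em m Y).getD (k+1) 0 ↔ (k % 4 = 0 ∨ k % 4 = 3)) := by
  rcases (by omega : k % 4 = 0 ∨ k % 4 = 1 ∨ k % 4 = 2 ∨ k % 4 = 3) with h | h | h | h
  · rcases eq_or_ne k 0 with rfl | h0
    · rw [Em_getD_zero, show (0+1 : ℕ) = 1 from rfl]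
      have := Em_bound_U m Y hm 1 (by omega) (by omega)
      constructor <;> intro hc <;> omega
    · have h1 := Em_bound_V m Y hm hYlen hYset k (by omega) (by omega) (by omega)
      have h2 := Em_bound_U m Y hm (k+1) (by omega) (by omega)
      constructor <;> intro hc <;> omega
  · have h1 := Em_bound_U m Y hm k h hk
    have h2 := Em_bound_V m Y hm hYlen hYset (k+1) (by omega) (by omega) (by omega)
    constructor <;> intro hc <;> omega
  · have h1 := Em_bound_V m Y hm hYlen hYset k (by omega) (by omega) (by omega)
    have h2 := Em_bound_W m Y hm (k+1) (by omega) (by omega)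
    constructor <;> intro hc <;> omega
  · have h1 := Em_bound_W m Y hm k h hk
    rcases eq_or_ne (k+1) (8*m+4) with he | hne
    · rw [he, Em_getD_last]
      constructor <;> intro hc <;> omega
    · have h2 := Em_bound_V m Y hm hYlen hYset (k+1) (by omega) (by omega) (by omega)
      constructor <;> intro hc <;> omega

end Signs

/-! ### Positional characterization of squares -/

lemma getD_take_drop (P : List ℤ) (s L o : ℕ) (ho : o < L) (h : s + L ≤ P.length) :
    ((P.drop s).take L).getD o 0 = P.getD (s + o) 0 := by
  have h1 : o < ((P.drop s).take L).length := by
    simp [List.length_take, List.length_drop]; omega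
  have h2 : s + o < P.length := by omega
  rw [List.getD_eq_getElem _ _ h1, List.getD_eq_getElem _ _ h2,
    List.getElem_take, List.getElem_drop]

lemma take_drop_infix (P : List ℤ) (s L : ℕ) : (P.drop s).take L <:+: P :=
  ((P.drop s).take_prefix L).isInfix.trans (P.drop_suffix s).isInfix

lemma containsSquare_iff (P : List ℤ) :
    ContainsSquare P ↔ ∃ s L, 2 ≤ L ∧ s + L + L ≤ P.length ∧
      ∀ o < L, ∀ o' < L,
        (P.getD (s+o) 0 < P.getD (s+o') 0 ↔ P.getD (s+L+o) 0 < P.getD (s+L+o') 0) := by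
  constructor
  · rintro ⟨f, ⟨u, v, huv⟩, a, b, rfl, hL, hlen, hiso⟩
    refine ⟨u.length, a.length, hL, ?_, ?_⟩
    · have := congrArg List.length huv
      simp at this
      omega
    · intro o ho o' ho'
      have key : ∀ w, w < a.length + a.length → P.getD (u.length + w) 0 = (a ++ b).getD w 0 := by
        intro w hw
        rw [← huv, List.getD_eq_getElem?_getD, List.getD_eq_getElem?_getD,
          List.getElem?_append_left (show u.length + w < (u ++ (a ++ b)).length by simp; omega),
          List.getElem?_append_right (show u.length ≤ u.length + w by omega),
          Nat.add_sub_cancel_left]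
      have ka : ∀ w, w < a.length → P.getD (u.length + w) 0 = a.getD w 0 := by
        intro w hw
        rw [key w (by omega), List.getD_eq_getElem?_getD, List.getD_eq_getElem?_getD,
          List.getElem?_append_left hw]
      have kb : ∀ w, w < a.length → P.getD (u.length + a.length + w) 0 = b.getD w 0 := by
        intro w hw
        rw [show u.length + a.length + w = u.length + (a.length + w) by omega,
          key _ (by omega), List.getD_eq_getElem?_getD, List.getD_eq_getElem?_getD,
          List.getElem?_append_right (show a.length ≤ a.length + w by omega),
          Nat.add_sub_cancel_left]
      rw [ka o ho, ka o' ho', kb o ho, kb o' ho']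
      exact hiso o o' ho ho'
  · rintro ⟨s, L, hL, hlen, hiso⟩
    refine ⟨(P.drop s).take (L+L), take_drop_infix P s (L+L),
      (P.drop s).take L, (P.drop (s+L)).take L, ?_, ?_, ?_, ?_⟩
    · rw [List.take_add, List.drop_drop]
    · simp [List.length_take, List.length_drop]; omega
    · simp [List.length_take, List.length_drop]; omega
    · intro o o' ho ho'
      have hL1 : o < L := by simp [List.length_take, List.length_drop] at ho; omega
      have hL2 : o' < L := by simp [List.length_take, List.length_drop] at ho'; omega
      rw [getD_take_drop P s L o hL1 (by omega), getD_take_drop P s L o' hL2 (by omega),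
        getD_take_drop P (s+L) L o hL1 (by omega), getD_take_drop P (s+L) L o' hL2 (by omega)]
      exact hiso o hL1 o' hL2

/-! ### No squares in Hm -/
section NoSquares
variable (m : ℕ) (Y : List ℤ) (hm : 2 ≤ m) (hYlen : Y.length = 2*m - 1)
  (hYset : ∀ y ∈ Y, (3*m + 4 : ℤ) ≤ y ∧ y ≤ (5*m + 2 : ℤ))
  (hYsf : SquareFreeL Y)

include hm hYlen hYset hYsf in
lemma Hm_noSquare (s K : ℕ) (hK : 2 ≤ K) (hlen : s + K + K ≤ 4*m+1)
    (hiso : ∀ o < K, ∀ o' < K,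
      ((Hm m Y).getD (s+o) 0 < (Hm m Y).getD (s+o') 0 ↔
        (Hm m Y).getD (s+K+o) 0 < (Hm m Y).getD (s+K+o') 0)) : False := by
  -- sign transfer
  have sgn : ∀ t, t + 1 < K →
      (((s+t) % 4 = 1 ∨ (s+t) % 4 = 2) ↔ ((s+K+t) % 4 = 1 ∨ (s+K+t) % 4 = 2)) := by
    intro t ht
    have h3 := hiso t (by omega) (t+1) (by omega)
    rw [show s+(t+1) = (s+t)+1 by omega, show s+K+(t+1) = (s+K+t)+1 by omega] at h3
    rw [Hm_sign m Y hm hYlen hYset (s+t) (by omega),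
      Hm_sign m Y hm hYlen hYset (s+K+t) (by omega)] at h3
    exact h3
  -- half-length divisible by 4
  have hK4 : K % 4 = 0 := by
    by_contra hne
    have s0 := sgn 0 (by omega)
    rcases (by omega : K = 2 ∨ 3 ≤ K) with h2 | h3
    · omega
    · have s1 := sgn 1 (by omega)
      omega
  rcases eq_or_ne s 0 with rfl | hs0
  · -- contains position 0
    have h := hiso 0 (by omega) 3 (by omega)
    simp only [Nat.zero_add, Nat.add_zero] at h
    rw [Hm_getD_zero] at h
    have b1 := Hm_bound_Z m Y hm 3 (by omega) (by omega)
    have b2 := Hm_bound_Y m Y hm hYlen hYset K (by omega) (by omega) (by omega)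
    have b3 := Hm_bound_Z m Y hm (K+3) (by omega) (by omega)
    omega
  rcases eq_or_ne (s+K+K) (4*m+1) with hend | hend
  · -- ends at position 4m
    have h := hiso (K-4) (by omega) (K-1) (by omega)
    rw [show s+(K-4) = 4*m-3-K by omega, show s+(K-1) = 4*m-K by omega,
      show s+K+(K-4) = 4*m-3 by omega, show s+K+(K-1) = 4*m by omega] at h
    have b1 := Hm_bound_X m Y hm (4*m-3-K) (by omega) (by omega)
    have b2 := Hm_bound_Y m Y hm hYlen hYset (4*m-K) (by omega) (by omega) (by omega)
    have b3 := Hm_bound_X m Y hm (4*m-3) (by omega) (by omega)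
    rw [Hm_getD_last m Y (by omega)] at h
    omega
  · -- interior: reduce to a square in Y
    apply hYsf
    rw [containsSquare_iff]
    have hsK : s + K + K ≤ 4*m := by omega
    set p₀ := s + s % 2 with hp₀
    refine ⟨p₀/2 - 1, K/2, by omega, by omega, ?_⟩
    intro o ho o' ho'
    have key : ∀ w, w < K → Y.getD (p₀/2 - 1 + w) 0 = (Hm m Y).getD (p₀ + 2*w) 0 := by
      intro w hw
      rw [Hm_getD_Y m Y (p₀ + 2*w) (by omega) (by omega) (by omega)]
      congr 1
      omega
    rw [key o (by omega), key o' (by omega),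
      show p₀/2 - 1 + K/2 + o = p₀/2 - 1 + (K/2 + o) by omega,
      show p₀/2 - 1 + K/2 + o' = p₀/2 - 1 + (K/2 + o') by omega,
      key (K/2 + o) (by omega), key (K/2 + o') (by omega)]
    have h := hiso (p₀ - s + 2*o) (by omega) (p₀ - s + 2*o') (by omega)
    rw [show s + (p₀ - s + 2*o) = p₀ + 2*o by omega,
      show s + (p₀ - s + 2*o') = p₀ + 2*o' by omega,
      show s + K + (p₀ - s + 2*o) = p₀ + 2*(K/2 + o) by omega,
      show s + K + (p₀ - s + 2*o') = p₀ + 2*(K/2 + o') by omega] at h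
    exact h

end NoSquares

section NoSquaresEm
variable (m : ℕ) (Y : List ℤ) (hm : 2 ≤ m) (hYlen : Y.length = 2*m - 1)
  (hYset : ∀ y ∈ Y, (3*m + 4 : ℤ) ≤ y ∧ y ≤ (5*m + 2 : ℤ))
  (hYsf : SquareFreeL Y)

include hm hYlen hYset hYsf in
lemma Em_noSquare (s K : ℕ) (hK : 2 ≤ K) (hlen : s + K + K ≤ 8*m+5)
    (hiso : ∀ o < K, ∀ o' < K,
      ((Em m Y).getD (s+o) 0 < (Em m Y).getD (s+o') 0 ↔
        (Em m Y).getD (s+K+o) 0 < (Em m Y).getD (s+K+o') 0)) : False := by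
  have sgn : ∀ t, t + 1 < K →
      (((s+t) % 4 = 0 ∨ (s+t) % 4 = 3) ↔ ((s+K+t) % 4 = 0 ∨ (s+K+t) % 4 = 3)) := by
    intro t ht
    have h3 := hiso t (by omega) (t+1) (by omega)
    rw [show s+(t+1) = (s+t)+1 by omega, show s+K+(t+1) = (s+K+t)+1 by omega] at h3
    rw [Em_sign m Y hm hYlen hYset (s+t) (by omega),
      Em_sign m Y hm hYlen hYset (s+K+t) (by omega)] at h3
    exact h3
  have hK4 : K % 4 = 0 := by
    by_contra hne
    have s0 := sgn 0 (by omega)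
    rcases (by omega : K = 2 ∨ 3 ≤ K) with h2 | h3
    · omega
    · have s1 := sgn 1 (by omega)
      omega
  rcases eq_or_ne s 0 with rfl | hs0
  · have h := hiso 0 (by omega) 3 (by omega)
    simp only [Nat.zero_add, Nat.add_zero] at h
    rw [Em_getD_zero] at h
    have b1 := Em_bound_W m Y hm 3 (by omega) (by omega)
    have b2 := Em_bound_V m Y hm hYlen hYset K (by omega) (by omega) (by omega)
    have b3 := Em_bound_W m Y hm (K+3) (by omega) (by omega)
    omega
  rcases eq_or_ne (s+K+K) (8*m+5) with hend | hend
  · have h := hiso (K-4) (by omega) (K-1) (by omega)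
    rw [show s+(K-4) = 8*m+1-K by omega, show s+(K-1) = 8*m+4-K by omega,
      show s+K+(K-4) = 8*m+1 by omega, show s+K+(K-1) = 8*m+4 by omega] at h
    have b1 := Em_bound_U m Y hm (8*m+1-K) (by omega) (by omega)
    have b2 := Em_bound_V m Y hm hYlen hYset (8*m+4-K) (by omega) (by omega) (by omega)
    have b3 := Em_bound_U m Y hm (8*m+1) (by omega) (by omega)
    rw [Em_getD_last] at h
    omega
  · -- interior: reduce to a square in Hm
    have hsK : s + K + K ≤ 8*m+4 := by omega
    set p₀ := s + s % 2 with hp₀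
    have key : ∀ w, w < K → (Hm m Y).getD (p₀/2 - 1 + w) 0 = (Em m Y).getD (p₀ + 2*w) 0 := by
      intro w hw
      rw [Em_getD_V m Y (p₀ + 2*w) (by omega) (by omega) (by omega)]
      congr 1
      omega
    apply Hm_noSquare m Y hm hYlen hYset hYsf (p₀/2 - 1) (K/2) (by omega) (by omega)
    intro o ho o' ho'
    rw [key o (by omega), key o' (by omega),
      show p₀/2 - 1 + K/2 + o = p₀/2 - 1 + (K/2 + o) by omega,
      show p₀/2 - 1 + K/2 + o' = p₀/2 - 1 + (K/2 + o') by omega,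
      key (K/2 + o) (by omega), key (K/2 + o') (by omega)]
    have h := hiso (p₀ - s + 2*o) (by omega) (p₀ - s + 2*o') (by omega)
    rw [show s + (p₀ - s + 2*o) = p₀ + 2*o by omega,
      show s + (p₀ - s + 2*o') = p₀ + 2*o' by omega,
      show s + K + (p₀ - s + 2*o) = p₀ + 2*(K/2 + o) by omega,
      show s + K + (p₀ - s + 2*o') = p₀ + 2*(K/2 + o') by omega] at h
    exact h

include hm hYlen hYset hYsf in
lemma Em_squareFree : SquareFreeL (Em m Y) := by
  intro hc
  rw [containsSquare_iff] at hc
  obtain ⟨s, K, hK, hlen, hiso⟩ := hc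
  exact Em_noSquare m Y hm hYlen hYset hYsf s K hK (by rw [Em_length] at hlen; omega) hiso

end NoSquaresEm

/-! ### Part 1 -/
section Part1
variable (m : ℕ) (Y : List ℤ) (hm : 2 ≤ m) (hYlen : Y.length = 2*m - 1)
  (hYset : ∀ y ∈ Y, (3*m + 4 : ℤ) ≤ y ∧ y ≤ (5*m + 2 : ℤ))

include hm hYlen hYset in
lemma part1 (i : ℕ) (h3 : 3 ≤ i) (h8 : i ≤ 8*m + 2) (Q : List ℤ)
    (hext : ExtL Q (Em m Y) i) :
    ∃ f : List ℤ, f <:+: Q ∧ f.length = 4 ∧ IsSquareL f := by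
  obtain ⟨hnd, hlenQ, hile, hlen_iso, hiso⟩ := hext
  rw [Em_length] at hlenQ
  have hQe : ∀ j, j < 8*m+5 →
      (Q.eraseIdx i).getD j 0 = if j < i then Q.getD j 0 else Q.getD (j+1) 0 := by
    intro j hj
    have hjlen : j < (Q.eraseIdx i).length := by
      rw [List.length_eraseIdx]
      split <;> omega
    rw [List.getD_eq_getElem _ _ hjlen, List.getElem_eraseIdx]
    by_cases hji : j < i
    · rw [dif_pos hji, if_pos hji]
      exact (List.getD_eq_getElem _ _ (by omega)).symm
    · rw [dif_neg hji, if_neg hji]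
      exact (List.getD_eq_getElem _ _ (by omega)).symm
  have hEl : (Q.eraseIdx i).length = 8*m+5 := by
    rw [List.length_eraseIdx]
    split <;> omega
  rw [hEl] at hiso
  have trans1 : ∀ k, k + 1 < i → k < 8*m+4 →
      (Q.getD k 0 < Q.getD (k+1) 0 ↔ (k % 4 = 0 ∨ k % 4 = 3)) := by
    intro k hk1 hk2
    have h := hiso k (k+1) (by omega) (by omega)
    rw [hQe k (by omega), hQe (k+1) (by omega), if_pos (by omega), if_pos (by omega),
      Em_sign m Y hm hYlen hYset k hk2] at h
    exact h
  have trans2 : ∀ k, i ≤ k → k + 1 < 8*m+5 →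
      (Q.getD (k+1) 0 < Q.getD (k+2) 0 ↔ (k % 4 = 0 ∨ k % 4 = 3)) := by
    intro k hk1 hk2
    have h := hiso k (k+1) (by omega) (by omega)
    rw [hQe k (by omega), hQe (k+1) (by omega), if_neg (by omega), if_neg (by omega),
      Em_sign m Y hm hYlen hYset k (by omega)] at h
    exact h
  have hne : ∀ k, k + 1 < 8*m+6 → Q.getD k 0 ≠ Q.getD (k+1) 0 := by
    intro k hk heq
    rw [List.getD_eq_getElem _ _ (show k < Q.length by omega),
      List.getD_eq_getElem _ _ (show k+1 < Q.length by omega)] at heq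
    have := (List.Nodup.getElem_inj_iff hnd).mp heq
    omega
  have key : ∃ k, k + 3 ≤ 8*m+5 ∧
      (Q.getD k 0 < Q.getD (k+1) 0 ↔ Q.getD (k+2) 0 < Q.getD (k+3) 0) := by
    by_contra hcon
    push_neg at hcon
    obtain ⟨j, rfl⟩ : ∃ j, i = j + 3 := ⟨i - 3, by omega⟩
    have t1 := trans1 j (by omega) (by omega)
    have t2 := trans1 (j+1) (by omega) (by omega)
    have t3 := trans2 (j+3) (by omega) (by omega)
    have t4 := trans2 (j+4) (by omega) (by omega)
    have c1 := hcon j (by omega)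
    have c2 := hcon (j+1) (by omega)
    have c3 := hcon (j+2) (by omega)
    have c4 := hcon (j+3) (by omega)
    rw [show j+1+1 = j+2 by omega] at t2
    rw [show j+3+1 = j+4 by omega, show j+3+2 = j+5 by omega] at t3
    rw [show j+4+1 = j+5 by omega, show j+4+2 = j+6 by omega] at t4
    rw [show j+1+1 = j+2 by omega, show j+1+2 = j+3 by omega, show j+1+3 = j+4 by omega] at c2
    rw [show j+2+1 = j+3 by omega, show j+2+2 = j+4 by omega, show j+2+3 = j+5 by omega] at c3
    rw [show j+3+1 = j+4 by omega, show j+3+2 = j+5 by omega, show j+3+3 = j+6 by omega] at c4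
    omega
  obtain ⟨k, hk, hck⟩ := key
  have hne1 := hne k (by omega)
  have hne2 := hne (k+2) (by omega)
  rw [show k+2+1 = k+3 by omega] at hne2
  refine ⟨(Q.drop k).take 4, take_drop_infix Q k 4, ?_, ?_⟩
  · rw [List.length_take, List.length_drop]
    omega
  · refine ⟨(Q.drop k).take 2, (Q.drop (k+2)).take 2, ?_, ?_, ?_, ?_⟩
    · rw [show (4:ℕ) = 2 + 2 from rfl, List.take_add, List.drop_drop]
    · rw [List.length_take, List.length_drop]
      omega
    · rw [List.length_take, List.length_take, List.length_drop, List.length_drop]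
      omega
    · have l2 : ((Q.drop k).take 2).length = 2 := by
        rw [List.length_take, List.length_drop]; omega
      rw [l2]
      intro a b ha hb
      rw [getD_take_drop Q k 2 a (by omega) (by omega),
        getD_take_drop Q k 2 b (by omega) (by omega),
        getD_take_drop Q (k+2) 2 a (by omega) (by omega),
        getD_take_drop Q (k+2) 2 b (by omega) (by omega)]
      interval_cases a <;> interval_cases b <;>
        simp only [Nat.add_zero, show k+2+1 = k+3 by omega] <;> omega
  
end Part1

/-! ### Nodup -/
section Nodup
variable (m : ℕ) (Y : List ℤ) (hm : 2 ≤ m) (hYlen : Y.length = 2*m - 1)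
  (hYnd : Y.Nodup)
  (hYset : ∀ y ∈ Y, (3*m + 4 : ℤ) ≤ y ∧ y ≤ (5*m + 2 : ℤ))

include hm hYlen hYset in
lemma Em_total_bound (p : ℕ) (hp : p ≤ 8*m+4) :
    (1:ℤ) ≤ (Em m Y).getD p 0 ∧ (Em m Y).getD p 0 ≤ (8*(m:ℤ)+5) := by
  rcases eq_or_ne p 0 with rfl | h0
  · rw [Em_getD_zero]; constructor <;> omega
  rcases eq_or_ne p (8*m+4) with rfl | h4
  · rw [Em_getD_last]; constructor <;> omega
  rcases Nat.mod_two_eq_zero_or_one p with he | ho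
  · have := Em_bound_V m Y hm hYlen hYset p he (by omega) (by omega)
    constructor <;> omega
  · rcases (by omega : p % 4 = 1 ∨ p % 4 = 3) with h | h
    · have := Em_bound_U m Y hm p h (by omega); constructor <;> omega
    · have := Em_bound_W m Y hm p h (by omega); constructor <;> omega

include hm hYlen hYnd hYset in
lemma Hm_ne (a b : ℕ) (hab : a < b) (hb : b ≤ 4*m) :
    (Hm m Y).getD a 0 ≠ (Hm m Y).getD b 0 := by
  have hbnd : ∀ q, 1 ≤ q → q < 4*m →
      (2*(m:ℤ)+4) ≤ (Hm m Y).getD q 0 ∧ (Hm m Y).getD q 0 ≤ (6*(m:ℤ)+2) := by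
    intro q h1 h2
    rcases Nat.mod_two_eq_zero_or_one q with he | ho
    · have := Hm_bound_Y m Y hm hYlen hYset q he h1 h2; constructor <;> omega
    · rcases (by omega : q % 4 = 1 ∨ q % 4 = 3) with h | h
      · have := Hm_bound_X m Y hm q h h2; constructor <;> omega
      · have := Hm_bound_Z m Y hm q h h2; constructor <;> omega
  rcases eq_or_ne a 0 with rfl | ha0
  · rw [Hm_getD_zero]
    rcases eq_or_ne b (4*m) with rfl | hb4
    · rw [Hm_getD_last m Y (by omega)]; omega
    · have := hbnd b (by omega) (by omega); omega
  rcases eq_or_ne b (4*m) with rfl | hb4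
  · rw [Hm_getD_last m Y (by omega)]
    have := hbnd a (by omega) (by omega); omega
  have ha' : a < 4*m := by omega
  have hb' : b < 4*m := by omega
  -- now both in the middle
  rcases Nat.mod_two_eq_zero_or_one a with hae | hao
  · rcases Nat.mod_two_eq_zero_or_one b with hbe | hbo
    · -- both Y entries
      rw [Hm_getD_Y m Y a hae (by omega) ha', Hm_getD_Y m Y b hbe (by omega) hb']
      have hia : a/2 - 1 < Y.length := by omega
      have hib : b/2 - 1 < Y.length := by omega
      rw [List.getD_eq_getElem _ _ hia, List.getD_eq_getElem _ _ hib]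
      intro heq
      have := (List.Nodup.getElem_inj_iff hYnd).mp heq
      omega
    · have h1 := Hm_bound_Y m Y hm hYlen hYset a hae (by omega) ha'
      rcases (by omega : b % 4 = 1 ∨ b % 4 = 3) with h | h
      · have h2 := Hm_bound_X m Y hm b h hb'; omega
      · have h2 := Hm_bound_Z m Y hm b h hb'; omega
  · rcases Nat.mod_two_eq_zero_or_one b with hbe | hbo
    · have h1 := Hm_bound_Y m Y hm hYlen hYset b hbe (by omega) hb'
      rcases (by omega : a % 4 = 1 ∨ a % 4 = 3) with h | h
      · have h2 := Hm_bound_X m Y hm a h ha'; omega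
      · have h2 := Hm_bound_Z m Y hm a h ha'; omega
    · rcases (by omega : a % 4 = 1 ∨ a % 4 = 3) with h | h <;>
        rcases (by omega : b % 4 = 1 ∨ b % 4 = 3) with h' | h'
      · rw [Hm_getD_X m Y a h ha', Hm_getD_X m Y b h' hb']
        have : (a-1)/4 < (b-1)/4 := by omega
        have := Int.ofNat_lt.mpr this
        omega
      · have h1 := Hm_bound_X m Y hm a h ha'
        have h2 := Hm_bound_Z m Y hm b h' hb'; omega
      · have h1 := Hm_bound_Z m Y hm a h ha'
        have h2 := Hm_bound_X m Y hm b h' hb'; omega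
      · rw [Hm_getD_Z m Y a h ha', Hm_getD_Z m Y b h' hb']
        have : (a-3)/4 < (b-3)/4 := by omega
        have := Int.ofNat_lt.mpr this
        omega

include hm hYlen hYnd hYset in
lemma Em_ne (p q : ℕ) (hpq : p < q) (hq : q ≤ 8*m+4) :
    (Em m Y).getD p 0 ≠ (Em m Y).getD q 0 := by
  rcases eq_or_ne p 0 with rfl | hp0
  · rw [Em_getD_zero]
    have := Em_total_bound m Y hm hYlen hYset q hq
    rcases eq_or_ne q (8*m+4) with rfl | hq4
    · rw [Em_getD_last]; omega
    rcases Nat.mod_two_eq_zero_or_one q with he | ho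
    · have := Em_bound_V m Y hm hYlen hYset q he (by omega) (by omega); omega
    · rcases (by omega : q % 4 = 1 ∨ q % 4 = 3) with h | h
      · have := Em_bound_U m Y hm q h (by omega); omega
      · have := Em_bound_W m Y hm q h (by omega); omega
  rcases eq_or_ne q (8*m+4) with rfl | hq4
  · rw [Em_getD_last]
    have := Em_total_bound m Y hm hYlen hYset p (by omega)
    rcases Nat.mod_two_eq_zero_or_one p with he | ho
    · have := Em_bound_V m Y hm hYlen hYset p he (by omega) (by omega); omega
    · rcases (by omega : p % 4 = 1 ∨ p % 4 = 3) with h | h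
      · have := Em_bound_U m Y hm p h (by omega); omega
      · have := Em_bound_W m Y hm p h (by omega); omega
  have hp' : p < 8*m+4 := by omega
  have hq' : q < 8*m+4 := by omega
  rcases Nat.mod_two_eq_zero_or_one p with hpe | hpo
  · rcases Nat.mod_two_eq_zero_or_one q with hqe | hqo
    · rw [Em_getD_V m Y p hpe (by omega) hp', Em_getD_V m Y q hqe (by omega) hq']
      exact Hm_ne m Y hm hYlen hYnd hYset (p/2-1) (q/2-1) (by omega) (by omega)
    · have h1 := Em_bound_V m Y hm hYlen hYset p hpe (by omega) hp'
      rcases (by omega : q % 4 = 1 ∨ q % 4 = 3) with h | h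
      · have h2 := Em_bound_U m Y hm q h hq'; omega
      · have h2 := Em_bound_W m Y hm q h hq'; omega
  · rcases Nat.mod_two_eq_zero_or_one q with hqe | hqo
    · have h1 := Em_bound_V m Y hm hYlen hYset q hqe (by omega) hq'
      rcases (by omega : p % 4 = 1 ∨ p % 4 = 3) with h | h
      · have h2 := Em_bound_U m Y hm p h hp'; omega
      · have h2 := Em_bound_W m Y hm p h hp'; omega
    · rcases (by omega : p % 4 = 1 ∨ p % 4 = 3) with h | h <;>
        rcases (by omega : q % 4 = 1 ∨ q % 4 = 3) with h' | h'
      · rw [Em_getD_U m Y p h hp', Em_getD_U m Y q h' hq']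
        have : (p-1)/4 < (q-1)/4 := by omega
        have := Int.ofNat_lt.mpr this
        omega
      · have h1 := Em_bound_U m Y hm p h hp'
        have h2 := Em_bound_W m Y hm q h' hq'; omega
      · have h1 := Em_bound_W m Y hm p h hp'
        have h2 := Em_bound_U m Y hm q h' hq'; omega
      · rw [Em_getD_W m Y p h hp', Em_getD_W m Y q h' hq']
        have : (p-3)/4 < (q-3)/4 := by omega
        have := Int.ofNat_lt.mpr this
        omega

include hm hYlen hYnd hYset in
lemma Em_nodup : (Em m Y).Nodup := by
  rw [List.Nodup, List.pairwise_iff_getElem]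
  intro a b ha hb hab
  rw [Em_length] at ha hb
  have := Em_ne m Y hm hYlen hYnd hYset a b hab (by omega)
  rw [List.getD_eq_getElem _ _ (by rw [Em_length]; omega),
    List.getD_eq_getElem _ _ (by rw [Em_length]; omega)] at this
  exact this

end Nodup

/-! ### Part 2 -/
section Part2
variable (m : ℕ) (Y : List ℤ) (hm : 2 ≤ m) (hYlen : Y.length = 2*m - 1)
  (hYnd : Y.Nodup)
  (hYset : ∀ y ∈ Y, (3*m + 4 : ℤ) ≤ y ∧ y ≤ (5*m + 2 : ℤ))
  (hYsf : SquareFreeL Y)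

include hm hYlen hYnd hYset in
lemma Q_ext : ExtL (List.insertIdx (Em m Y) 2 (8*(m:ℤ)+6)) (Em m Y) 2 := by
  have hlen : (2:ℕ) ≤ (Em m Y).length := by rw [Em_length]; omega
  refine ⟨?_, ?_, ?_, ?_⟩
  · rw [(List.perm_insertIdx _ _ hlen).nodup_iff, List.nodup_cons]
    refine ⟨?_, Em_nodup m Y hm hYlen hYnd hYset⟩
    intro hmem
    rw [List.mem_iff_getElem] at hmem
    obtain ⟨n, hn, he⟩ := hmem
    rw [Em_length] at hn
    have := Em_total_bound m Y hm hYlen hYset n (by omega)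
    rw [List.getD_eq_getElem _ _ (by rw [Em_length]; omega), he] at this
    omega
  · rw [List.length_insertIdx_of_le_length hlen]
  · exact hlen
  · rw [List.eraseIdx_insertIdx_self]
    exact ⟨rfl, fun i j _ _ => Iff.rfl⟩

include hm hYlen hYset hYsf in
lemma Qgen_noSquare (Q : List ℤ) (hQlen : Q.length = 8*m+6)
    (hQlt : ∀ k, k < 2 → Q.getD k 0 = (Em m Y).getD k 0)
    (hQ2 : Q.getD 2 0 = 8*(m:ℤ)+6)
    (hQ3 : ∀ k, 3 ≤ k → k ≤ 8*m+5 → Q.getD k 0 = (Em m Y).getD (k-1) 0) :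
    ¬ ContainsSquare Q := by
  rw [containsSquare_iff]
  rintro ⟨s, K, hK, hlen, hiso⟩
  rw [hQlen] at hlen
  rcases (by omega : 3 ≤ s ∨ s ≤ 2) with hs | hs
  · -- square avoiding the inserted element: a square of Em
    apply Em_noSquare m Y hm hYlen hYset hYsf (s-1) K hK (by omega)
    intro o ho o' ho'
    have e1 : (Em m Y).getD (s-1+o) 0 = Q.getD (s+o) 0 := by
      rw [hQ3 (s+o) (by omega) (by omega)]; congr 1; omega
    have e2 : (Em m Y).getD (s-1+o') 0 = Q.getD (s+o') 0 := by
      rw [hQ3 (s+o') (by omega) (by omega)]; congr 1; omega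
    have e3 : (Em m Y).getD (s-1+K+o) 0 = Q.getD (s+K+o) 0 := by
      rw [hQ3 (s+K+o) (by omega) (by omega)]; congr 1; omega
    have e4 : (Em m Y).getD (s-1+K+o') 0 = Q.getD (s+K+o') 0 := by
      rw [hQ3 (s+K+o') (by omega) (by omega)]; congr 1; omega
    rw [e1, e2, e3, e4]
    exact hiso o ho o' ho'
  · -- square containing the inserted maximum
    have hQsign : ∀ k, k < 8*m+5 →
        (Q.getD k 0 < Q.getD (k+1) 0 ↔ (k % 4 = 0 ∨ k % 4 = 1)) := by
      intro k hk
      rcases (by omega : k = 0 ∨ k = 1 ∨ k = 2 ∨ 3 ≤ k) with rfl | rfl | rfl | h3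
      · rw [hQlt 0 (by omega), hQlt 1 (by omega), Em_getD_zero]
        have := Em_bound_U m Y hm 1 (by omega) (by omega)
        constructor <;> intro hc <;> omega
      · rw [hQlt 1 (by omega), hQ2]
        have := Em_total_bound m Y hm hYlen hYset 1 (by omega)
        constructor <;> intro hc <;> omega
      · rw [hQ2, hQ3 3 (by omega) (by omega), show (3:ℕ)-1 = 2 by omega]
        have := Em_total_bound m Y hm hYlen hYset 2 (by omega)
        constructor <;> intro hc <;> omega
      · rw [hQ3 k (by omega) (by omega), hQ3 (k+1) (by omega) (by omega),
          show k+1-1 = (k-1)+1 by omega,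
          Em_sign m Y hm hYlen hYset (k-1) (by omega)]
        omega
    have sgn : ∀ t, t + 1 < K →
        (((s+t) % 4 = 0 ∨ (s+t) % 4 = 1) ↔ ((s+K+t) % 4 = 0 ∨ (s+K+t) % 4 = 1)) := by
      intro t ht
      have h3 := hiso t (by omega) (t+1) (by omega)
      rw [show s+(t+1) = (s+t)+1 by omega, show s+K+(t+1) = (s+K+t)+1 by omega] at h3
      rw [hQsign (s+t) (by omega), hQsign (s+K+t) (by omega)] at h3
      exact h3
    have hK4 : K % 4 = 0 := by
      by_contra hne
      have s0 := sgn 0 (by omega)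
      rcases (by omega : K = 2 ∨ 3 ≤ K) with h2 | h3
      · omega
      · have s1 := sgn 1 (by omega)
        omega
    rcases (by omega : K = 4 ∨ 8 ≤ K) with rfl | hK8
    · -- K = 4 : small mismatches
      have hEm2 : (Em m Y).getD 2 0 = 6*m+3 := by
        rw [Em_getD_V m Y 2 (by omega) (by omega) (by omega),
          show (2:ℕ)/2 - 1 = 0 by norm_num, Hm_getD_zero]
      have hEm4 : (Em m Y).getD 4 0 ≤ 3*(m:ℤ)+3 := by
        rw [Em_getD_V m Y 4 (by omega) (by omega) (by omega),
          show (4:ℕ)/2 - 1 = 1 by norm_num]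
        exact (Hm_bound_X m Y hm 1 (by omega) (by omega)).2
      have hEm6 : (3*(m:ℤ)+4) ≤ (Em m Y).getD 6 0 ∧ (Em m Y).getD 6 0 ≤ 5*(m:ℤ)+2 := by
        rw [Em_getD_V m Y 6 (by omega) (by omega) (by omega),
          show (6:ℕ)/2 - 1 = 2 by norm_num]
        exact Hm_bound_Y m Y hm hYlen hYset 2 (by omega) (by omega) (by omega)
      rcases (by omega : s ≤ 1 ∨ s = 2) with hs1 | rfl
      · have h := hiso (1-s) (by omega) (3-s) (by omega)
        rw [show s+(1-s) = 1 by omega, show s+(3-s) = 3 by omega,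
          show s+4+(1-s) = 5 by omega, show s+4+(3-s) = 7 by omega] at h
        rw [hQlt 1 (by omega), hQ3 3 (by omega) (by omega), hQ3 5 (by omega) (by omega),
          hQ3 7 (by omega) (by omega), show (3:ℕ)-1 = 2 by omega,
          show (5:ℕ)-1 = 4 by omega, show (7:ℕ)-1 = 6 by omega] at h
        have b1 := Em_bound_U m Y hm 1 (by omega) (by omega)
        rw [hEm2] at h
        omega
      · have h := hiso 1 (by omega) 3 (by omega)
        rw [show 2+1 = 3 by omega, show 2+3 = 5 by omega,
          show 2+4+1 = 7 by omega, show 2+4+3 = 9 by omega] at h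
        rw [hQ3 3 (by omega) (by omega), hQ3 5 (by omega) (by omega),
          hQ3 7 (by omega) (by omega), hQ3 9 (by omega) (by omega),
          show (3:ℕ)-1 = 2 by omega, show (5:ℕ)-1 = 4 by omega,
          show (7:ℕ)-1 = 6 by omega, show (9:ℕ)-1 = 8 by omega] at h
        have hEm8 : (5*(m:ℤ)+3) ≤ (Em m Y).getD 8 0 := by
          rw [Em_getD_V m Y 8 (by omega) (by omega) (by omega),
            show (8:ℕ)/2 - 1 = 3 by norm_num]
          exact (Hm_bound_Z m Y hm 3 (by omega) (by omega)).1
        rw [hEm2] at h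
        omega
    · -- K ≥ 8 : the inserted maximum forces a U-U comparison mismatch
      have h := hiso (2-s) (by omega) (2-s+4) (by omega)
      rw [show s+(2-s) = 2 by omega, show s+(2-s+4) = 6 by omega,
        show s+K+(2-s) = K+2 by omega, show s+K+(2-s+4) = K+6 by omega] at h
      rw [hQ2, hQ3 6 (by omega) (by omega), hQ3 (K+2) (by omega) (by omega),
        hQ3 (K+6) (by omega) (by omega), show (6:ℕ)-1 = 5 by omega,
        show K+2-1 = K+1 by omega, show K+6-1 = K+5 by omega] at h
      have b5 := Em_total_bound m Y hm hYlen hYset 5 (by omega)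
      have u1 : (Em m Y).getD (K+1) 0 = (6*(m:ℤ)+4) + ((K+1-1)/4 : ℕ) :=
        Em_getD_U m Y (K+1) (by omega) (by omega)
      have u2 : (Em m Y).getD (K+5) 0 = (6*(m:ℤ)+4) + ((K+5-1)/4 : ℕ) :=
        Em_getD_U m Y (K+5) (by omega) (by omega)
      have hlt : (K+1-1)/4 < (K+5-1)/4 := by omega
      have := Int.ofNat_lt.mpr hlt
      omega

include hm hYlen hYset hYsf in
lemma Q_noSquare : ¬ ContainsSquare (List.insertIdx (Em m Y) 2 (8*(m:ℤ)+6)) := by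
  have hlenE2 : (2:ℕ) ≤ (Em m Y).length := by rw [Em_length]; omega
  have hQlen : (List.insertIdx (Em m Y) 2 (8*(m:ℤ)+6)).length = 8*m+6 := by
    rw [List.length_insertIdx_of_le_length hlenE2, Em_length]
  apply Qgen_noSquare m Y hm hYlen hYset hYsf _ hQlen
  · intro k hk
    rw [List.getD_eq_getElem _ _ (by omega),
      List.getElem_insertIdx_of_lt hk,
      List.getD_eq_getElem _ _ (by rw [Em_length]; omega)]
  · rw [List.getD_eq_getElem _ _ (by omega),
      List.getElem_insertIdx_self]
  · intro k h3 h5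
    obtain ⟨j, rfl⟩ : ∃ j, k = 2 + j + 1 := ⟨k - 3, by omega⟩
    have hb : 2 + j < (Em m Y).length := by rw [Em_length]; omega
    rw [List.getD_eq_getElem _ _ (by omega),
      List.getElem_insertIdx_add_succ (Em m Y) _ 2 j hb,
      show 2+j+1-1 = 2+j by omega,
      List.getD_eq_getElem _ _ hb]

end Part2

theorem stmt15 (m : ℕ) (hm : 2 ≤ m) (Y : List ℤ)
    (hYlen : Y.length = 2*m - 1) (hYnd : Y.Nodup)
    (hYset : ∀ y ∈ Y, (3*m + 4 : ℤ) ≤ y ∧ y ≤ (5*m + 2 : ℤ))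
    (hYsf : SquareFreeL Y)
    (hy2 : Y.getD 1 0 > Y.getD 2 0)
    (hy3 : Y.getD (2*m - 4) 0 > Y.getD (2*m - 3) 0) :
    (∀ i : ℕ, 3 ≤ i → i ≤ 8*m + 2 → ∀ Q : List ℤ, ExtL Q (Em m Y) i →
      ∃ f : List ℤ, f <:+: Q ∧ f.length = 4 ∧ IsSquareL f) ∧
    ¬ (SquareFreeL (Em m Y) ∧
        ∀ i ≤ 8*m + 5, ∀ Q : List ℤ, ExtL Q (Em m Y) i → ContainsSquare Q) := by
  constructor
  · intro i hi3 hi8 Q hext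
    exact part1 m Y hm hYlen hYset i hi3 hi8 Q hext
  · rintro ⟨hsf, hall⟩
    exact Q_noSquare m Y hm hYlen hYset hYsf
      (hall 2 (by omega) _ (Q_ext m Y hm hYlen hYnd hYset))
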